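/- Let a, b, k > 0 and let (x, y) ∈ ℝ² with (x, y) ≠ (0, 0). Define γ = x²/a² + y²/b², ψ_T = atan2(b²·x, −a²·y), ψ_O = arctan(k·(γ − 1)), and ψ_D = ψ_T + ψ_O. Then the quantity G(x, y) = (2x/a²)·cos(ψ_D) + (2y/b²)·sin(ψ_D) is strictly positive if γ < 1, strictly negative if γ > 1, and zero if γ = 1. Consequently, (γ − 1)·G(x, y) < 0 whenever γ ≠ 1. -/

import Mathlib

open Real

/-- The counter-clockwise tangential heading at `(x, y)`:
`atan2 (b² x, −a² y)`, i.e. the argument of the complex number `−a² y + i b² x`. -/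
noncomputable def psiT (a b x y : ℝ) : ℝ :=
  Complex.arg ⟨-(a ^ 2) * y, b ^ 2 * x⟩

/-- The offset angle `ψ_O = arctan (k (γ − 1))` with `γ = x²/a² + y²/b²`. -/
noncomputable def psiO (a b k x y : ℝ) : ℝ :=
  Real.arctan (k * (x ^ 2 / a ^ 2 + y ^ 2 / b ^ 2 - 1))

/-- The desired heading `ψ_D = ψ_T + ψ_O`. -/
noncomputable def psiD (a b k x y : ℝ) : ℝ :=
  psiT a b x y + psiO a b k x y

/-- The inner product of the gradient `(2x/a², 2y/b²)` with the unit heading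
vector `(cos ψ_D, sin ψ_D)`. -/
noncomputable def G (a b k x y : ℝ) : ℝ :=
  (2 * x / a ^ 2) * Real.cos (psiD a b k x y) +
    (2 * y / b ^ 2) * Real.sin (psiD a b k x y)

lemma G_eq (a b k : ℝ) (ha : 0 < a) (hb : 0 < b)
    (x y : ℝ) (hxy : (x, y) ≠ (0, 0)) :
    G a b k x y =
      -((2 * (b ^ 2 * x ^ 2 / a ^ 2 + a ^ 2 * y ^ 2 / b ^ 2)) /
        ‖(⟨-(a ^ 2) * y, b ^ 2 * x⟩ : ℂ)‖) * Real.sin (psiO a b k x y) := by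
  set z : ℂ := ⟨-(a ^ 2) * y, b ^ 2 * x⟩ with hzdef
  have hz : z ≠ 0 := by
    intro h
    apply hxy
    have hre : -(a ^ 2) * y = 0 := by
      have := congrArg Complex.re h; simpa [hzdef] using this
    have him : b ^ 2 * x = 0 := by
      have := congrArg Complex.im h; simpa [hzdef] using this
    have hy : y = 0 := by
      rcases mul_eq_zero.1 hre with h' | h'
      · exact absurd h' (by nlinarith)
      · exact h'
    have hx : x = 0 := by
      rcases mul_eq_zero.1 him with h' | h'
      · exact absurd h' (by nlinarith [sq_nonneg b])
      · exact h'
    simp [hx, hy]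
  have hr : 0 < ‖z‖ := by
    simpa using (norm_pos_iff.mpr hz)
  have hcos : Real.cos (psiT a b x y) = (-(a ^ 2) * y) / ‖z‖ := by
    simpa [psiT, hzdef] using Complex.cos_arg hz
  have hsin : Real.sin (psiT a b x y) = (b ^ 2 * x) / ‖z‖ := by
    simpa [psiT, hzdef] using Complex.sin_arg z
  have h : G a b k x y = (2 * x / a ^ 2) *
      (Real.cos (psiT a b x y) * Real.cos (psiO a b k x y) -
        Real.sin (psiT a b x y) * Real.sin (psiO a b k x y)) +
    (2 * y / b ^ 2) *
      (Real.sin (psiT a b x y) * Real.cos (psiO a b k x y) +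
        Real.cos (psiT a b x y) * Real.sin (psiO a b k x y)) := by
    simp [G, psiD, Real.cos_add, Real.sin_add]
  rw [h, hcos, hsin]
  field_simp
  ring

theorem gradient_heading_inner_product_sign
    (a b k : ℝ) (ha : 0 < a) (hb : 0 < b) (hk : 0 < k)
    (x y : ℝ) (hxy : (x, y) ≠ (0, 0)) :
    (x ^ 2 / a ^ 2 + y ^ 2 / b ^ 2 < 1 → 0 < G a b k x y) ∧
    (1 < x ^ 2 / a ^ 2 + y ^ 2 / b ^ 2 → G a b k x y < 0) ∧
    (x ^ 2 / a ^ 2 + y ^ 2 / b ^ 2 = 1 → G a b k x y = 0) ∧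
    (x ^ 2 / a ^ 2 + y ^ 2 / b ^ 2 ≠ 1 →
      (x ^ 2 / a ^ 2 + y ^ 2 / b ^ 2 - 1) * G a b k x y < 0) := by
  have hxy' : x ≠ 0 ∨ y ≠ 0 := by
    by_contra h
    push_neg at h
    exact hxy (by simp [h.1, h.2])
  have hC : 0 < b ^ 2 * x ^ 2 / a ^ 2 + a ^ 2 * y ^ 2 / b ^ 2 := by
    rcases hxy' with hx | hy
    · have : 0 < b ^ 2 * x ^ 2 / a ^ 2 := by positivity
      have h2 : 0 ≤ a ^ 2 * y ^ 2 / b ^ 2 := by positivity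
      linarith
    · have : 0 < a ^ 2 * y ^ 2 / b ^ 2 := by positivity
      have h2 : 0 ≤ b ^ 2 * x ^ 2 / a ^ 2 := by positivity
      linarith
  have hz : (⟨-(a ^ 2) * y, b ^ 2 * x⟩ : ℂ) ≠ 0 := by
    intro h
    apply hxy
    have hre : -(a ^ 2) * y = 0 := by
      have := congrArg Complex.re h; simpa using this
    have him : b ^ 2 * x = 0 := by
      have := congrArg Complex.im h; simpa using this
    have hy : y = 0 := by
      rcases mul_eq_zero.1 hre with h' | h'
      · exact absurd h' (by nlinarith)
      · exact h'
    have hx : x = 0 := by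
      rcases mul_eq_zero.1 him with h' | h'
      · exact absurd h' (by nlinarith [sq_nonneg b])
      · exact h'
    simp [hx, hy]
  have hr : 0 < ‖(⟨-(a ^ 2) * y, b ^ 2 * x⟩ : ℂ)‖ :=
    norm_pos_iff.mpr hz
  have hcoef : 0 < (2 * (b ^ 2 * x ^ 2 / a ^ 2 + a ^ 2 * y ^ 2 / b ^ 2)) /
      ‖(⟨-(a ^ 2) * y, b ^ 2 * x⟩ : ℂ)‖ := by positivity
  have hGeq := G_eq a b k ha hb x y hxy
  set γ := x ^ 2 / a ^ 2 + y ^ 2 / b ^ 2 with hγ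
  -- sin of psiO has sign of γ - 1
  have hsin : Real.sin (psiO a b k x y) =
      (k * (γ - 1)) / Real.sqrt (1 + (k * (γ - 1)) ^ 2) := by
    simp [psiO, Real.sin_arctan, hγ]
  have hsqrt : 0 < Real.sqrt (1 + (k * (γ - 1)) ^ 2) := by
    apply Real.sqrt_pos.2; positivity
  have key : ∀ h : γ < 1 ∨ 1 < γ ∨ γ = 1, True := fun _ => trivial
  refine ⟨?_, ?_, ?_, ?_⟩
  · intro h
    rw [hGeq, hsin]
    have : k * (γ - 1) < 0 := by nlinarith
    have : (k * (γ - 1)) / Real.sqrt (1 + (k * (γ - 1)) ^ 2) < 0 :=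
      div_neg_of_neg_of_pos this hsqrt
    nlinarith
  · intro h
    rw [hGeq, hsin]
    have : 0 < k * (γ - 1) := by nlinarith
    have : 0 < (k * (γ - 1)) / Real.sqrt (1 + (k * (γ - 1)) ^ 2) :=
      div_pos this hsqrt
    nlinarith
  · intro h
    rw [hGeq, hsin, h]
    simp
  · intro h
    rcases lt_or_gt_of_ne h with h1 | h1
    · have hG : 0 < G a b k x y := by
        rw [hGeq, hsin]
        have : k * (γ - 1) < 0 := by nlinarith
        have : (k * (γ - 1)) / Real.sqrt (1 + (k * (γ - 1)) ^ 2) < 0 :=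
          div_neg_of_neg_of_pos this hsqrt
        nlinarith
      have : γ - 1 < 0 := by linarith
      exact mul_neg_of_neg_of_pos this hG
    · have hG : G a b k x y < 0 := by
        rw [hGeq, hsin]
        have : 0 < k * (γ - 1) := by nlinarith
        have : 0 < (k * (γ - 1)) / Real.sqrt (1 + (k * (γ - 1)) ^ 2) :=
          div_pos this hsqrt
        nlinarith
      have : 0 < γ - 1 := by linarith
      exact mul_neg_of_pos_of_neg this hG
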